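/- Assume Q(s,u) ≠ ∅ for every u ∈ M and every s ∈ ℝ, and let α ∈ (0,1). Define the extended-real-valued lower fiducial confidence bound C⁻_α(s) := inf{c ∈ ℝ : P(Q⁻_s(U*) > c) ≤ 1−α}. Then s ↦ C⁻_α(s) is nondecreasing (hence measurable), and for every θ ∈ ℝ the coverage of the one-sided lower confidence bound is at least the nominal level: P( θ ≥ C⁻_α(G_S(U,θ)) ) ≥ 1 − α. -/

import Mathlib

open MeasureTheory Filter Set Topology

/-- The lower fiducial quantity `Q⁻_s(u) = inf {θ : GS u θ = s}` (as an extended real). -/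
noncomputable def Qminf {M : Type*} (GS : M → ℝ → ℝ) (u : M) (s : ℝ) : EReal :=
  sInf (Real.toEReal '' {θ : ℝ | GS u θ = s})

/-- If `s ≤ GS u t` then `Q⁻_s(u) ≤ t`. -/
theorem Qminf_le {M : Type*} {GS : M → ℝ → ℝ} (hmono : ∀ u : M, Monotone (GS u))
    (hne : ∀ (u : M) (s : ℝ), {θ : ℝ | GS u θ = s}.Nonempty)
    (u : M) (s t : ℝ) (hst : s ≤ GS u t) : Qminf GS u s ≤ (t : EReal) := by
  obtain ⟨θ₀, hθ₀⟩ := hne u s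
  rcases le_or_gt θ₀ t with h | h
  · exact (sInf_le (mem_image_of_mem _ hθ₀)).trans (EReal.coe_le_coe_iff.mpr h)
  · have hts : GS u t = s := le_antisymm (by rw [← hθ₀]; exact hmono u h.le) hst
    exact sInf_le (mem_image_of_mem _ hts)

/-- `Q⁻_s(u)` is nondecreasing in `s`. -/
theorem Qminf_mono {M : Type*} {GS : M → ℝ → ℝ} (hmono : ∀ u : M, Monotone (GS u))
    (hne : ∀ (u : M) (s : ℝ), {θ : ℝ | GS u θ = s}.Nonempty)
    (u : M) : Monotone (Qminf GS u) := by
  intro s s' hss'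
  refine le_sInf ?_
  rintro x ⟨t, ht, rfl⟩
  exact Qminf_le hmono hne u s t (le_of_le_of_eq hss' ht.symm)

/-- the lower fiducial confidence bound
`C⁻_α(s) = inf{c : P(Q⁻_s(U*) > c) ≤ 1−α}` is nondecreasing in `s` and has one-sided
frequentist coverage at least `1 − α`. -/
theorem fiducial_lower_confidence_bound
    {M Ω : Type*} [MeasurableSpace M] [MeasurableSpace Ω]
    (P : Measure Ω) [IsProbabilityMeasure P]
    (U Ustar : Ω → M) (hU : Measurable U) (hUstar : Measurable Ustar)
    (hdist : Measure.map Ustar P = Measure.map U P)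
    (GS : M → ℝ → ℝ) (hGS : Measurable (Function.uncurry GS))
    (hmono : ∀ u : M, Monotone (GS u))
    (hne : ∀ (u : M) (s : ℝ), {θ : ℝ | GS u θ = s}.Nonempty)
    (α : ℝ) (hα : α ∈ Set.Ioo (0 : ℝ) 1)
    (Cminus : ℝ → EReal)
    (hC : ∀ s : ℝ, Cminus s = sInf (Real.toEReal ''
      {c : ℝ | (P {ω : Ω | (c : EReal)
        < sInf (Real.toEReal '' {θ : ℝ | GS (Ustar ω) θ = s})}).toReal ≤ 1 - α})) :
    Monotone Cminus ∧
    ∀ θ : ℝ, 1 - α ≤ (P {ω : Ω | Cminus (GS (U ω) θ) ≤ (θ : EReal)}).toReal := by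
  obtain ⟨hα0, hα1⟩ := hα
  have hPfin : ∀ A : Set Ω, P A ≠ ⊤ := fun A => (measure_lt_top P A).ne
  -- restate hC in terms of Qminf (definitional)
  have hC' : ∀ s : ℝ, Cminus s = sInf (Real.toEReal ''
      {c : ℝ | (P {ω : Ω | (c : EReal) < Qminf GS (Ustar ω) s}).toReal ≤ 1 - α}) := hC
  constructor
  · -- monotonicity of Cminus
    intro s s' hss'
    rw [hC' s, hC' s']
    refine sInf_le_sInf (image_mono ?_)
    intro c hc
    simp only [mem_setOf_eq] at hc ⊢
    refine le_trans (ENNReal.toReal_mono (hPfin _) (measure_mono ?_)) hc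
    exact fun ω hω => lt_of_lt_of_le hω (Qminf_mono hmono hne _ hss')
  · intro θ
    have hfm : Measurable fun u : M => GS u θ :=
      hGS.comp (measurable_id.prodMk measurable_const)
    -- transfer of events through equality of distributions
    have transfer : ∀ B : Set ℝ, MeasurableSet B →
        P {ω | GS (U ω) θ ∈ B} = P {ω | GS (Ustar ω) θ ∈ B} := by
      intro B hB
      have hB' : MeasurableSet ((fun u => GS u θ) ⁻¹' B) := hfm hB
      have h1 : P {ω | GS (U ω) θ ∈ B} = Measure.map U P ((fun u => GS u θ) ⁻¹' B) := by
        rw [Measure.map_apply hU hB']; rfl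
      have h2 : P {ω | GS (Ustar ω) θ ∈ B} = Measure.map Ustar P ((fun u => GS u θ) ⁻¹' B) := by
        rw [Measure.map_apply hUstar hB']; rfl
      rw [h1, h2, hdist]
    -- the fiducial distribution function at θ
    set h : ℝ → ℝ := fun s => (P {ω | (θ : EReal) < Qminf GS (Ustar ω) s}).toReal with hhdef
    have hmonoh : Monotone h := by
      intro s s' hss'
      refine ENNReal.toReal_mono (hPfin _) (measure_mono ?_)
      exact fun ω hω => lt_of_lt_of_le hω (Qminf_mono hmono hne _ hss')
    have hF : ∀ s : ℝ, {ω | (θ : EReal) < Qminf GS (Ustar ω) s} ⊆ {ω | GS (Ustar ω) θ < s} :=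
      fun s ω hω => lt_of_not_ge fun hle => (Qminf_le hmono hne _ s θ hle).not_gt hω
    have hDle : ∀ s : ℝ, h s ≤ 1 - α → Cminus s ≤ (θ : EReal) := by
      intro s hs
      rw [hC' s]
      exact sInf_le (mem_image_of_mem _ hs)
    -- a helper to conclude from a transferred event
    have final : ∀ B : Set ℝ, MeasurableSet B →
        {ω | GS (U ω) θ ∈ B} ⊆ {ω : Ω | Cminus (GS (U ω) θ) ≤ (θ : EReal)} →
        1 - α ≤ (P {ω | GS (Ustar ω) θ ∈ B}).toReal →
        1 - α ≤ (P {ω : Ω | Cminus (GS (U ω) θ) ≤ (θ : EReal)}).toReal := by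
      intro B hB hsub hge
      calc 1 - α ≤ (P {ω | GS (Ustar ω) θ ∈ B}).toReal := hge
        _ = (P {ω | GS (U ω) θ ∈ B}).toReal := by rw [transfer B hB]
        _ ≤ _ := ENNReal.toReal_mono (hPfin _) (measure_mono hsub)
    -- the set D = {s | h s ≤ 1 - α} is nonempty
    have hDne : ∃ s : ℝ, h s ≤ 1 - α := by
      by_contra hcon
      push_neg at hcon
      have hmeasA : ∀ n : ℕ, NullMeasurableSet {ω | GS (Ustar ω) θ ≤ -(n : ℝ)} P :=
        fun n => (measurableSet_le (hfm.comp hUstar) measurable_const).nullMeasurableSet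
      have hanti : Antitone fun n : ℕ => {ω | GS (Ustar ω) θ ≤ -(n : ℝ)} := by
        intro n m hnm ω hω
        simp only [mem_setOf_eq] at hω ⊢
        have hcast : (n : ℝ) ≤ (m : ℝ) := by exact_mod_cast hnm
        linarith
      have hiInf := Directed.measure_iInter hmeasA hanti.directed_ge ⟨0, hPfin _⟩
      have hempty : (⋂ n : ℕ, {ω | GS (Ustar ω) θ ≤ -(n : ℝ)}) = (∅ : Set Ω) := by
        ext ω
        simp only [mem_iInter, mem_setOf_eq, mem_empty_iff_false, iff_false, not_forall, not_le]
        obtain ⟨n, hn⟩ := exists_nat_gt (-(GS (Ustar ω) θ))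
        exact ⟨n, by linarith⟩
      have hbound : ∀ n : ℕ, ENNReal.ofReal (1 - α) ≤ P {ω | GS (Ustar ω) θ ≤ -(n : ℝ)} := by
        intro n
        have h1 : 1 - α < h (-(n : ℝ)) := hcon _
        have h2 : h (-(n : ℝ)) ≤ (P {ω | GS (Ustar ω) θ ≤ -(n : ℝ)}).toReal := by
          rw [hhdef]
          refine ENNReal.toReal_mono (hPfin _) (measure_mono ((hF _).trans ?_))
          intro ω hω
          simp only [mem_setOf_eq] at hω ⊢
          exact hω.le
        exact ENNReal.ofReal_le_of_le_toReal (by linarith)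
      have hzero : ENNReal.ofReal (1 - α) ≤ 0 := by
        calc ENNReal.ofReal (1 - α) ≤ ⨅ n : ℕ, P {ω | GS (Ustar ω) θ ≤ -(n : ℝ)} :=
              le_iInf hbound
          _ = P (⋂ n : ℕ, {ω | GS (Ustar ω) θ ≤ -(n : ℝ)}) := hiInf.symm
          _ = 0 := by rw [hempty, measure_empty]
      have hpos : 0 < ENNReal.ofReal (1 - α) := ENNReal.ofReal_pos.mpr (by linarith)
      exact absurd hzero hpos.not_ge
    obtain ⟨s₀, hs₀⟩ := hDne
    by_cases hbdd : BddAbove {s : ℝ | h s ≤ 1 - α}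
    · set sstar := sSup {s : ℝ | h s ≤ 1 - α} with hsstar
      by_cases hmem : h sstar ≤ 1 - α
      · -- sSup attained in D : use the event {GS (U ω) θ ≤ sstar}
        refine final (Iic sstar) measurableSet_Iic ?_ ?_
        · intro ω hω
          exact hDle _ (le_trans (hmonoh hω) hmem)
        · -- 1 - α ≤ P {GS (Ustar ω) θ ≤ sstar}
          have hmeasA : ∀ n : ℕ,
              NullMeasurableSet {ω | GS (Ustar ω) θ < sstar + 1 / ((n : ℝ) + 1)} P :=
            fun n => (measurableSet_lt (hfm.comp hUstar) measurable_const).nullMeasurableSet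
          have hanti : Antitone fun n : ℕ => {ω | GS (Ustar ω) θ < sstar + 1 / ((n : ℝ) + 1)} := by
            intro n m hnm ω hω
            simp only [mem_setOf_eq] at hω ⊢
            have h1 : 1 / ((m : ℝ) + 1) ≤ 1 / ((n : ℝ) + 1) := by
              apply one_div_le_one_div_of_le
              · positivity
              · have : (n : ℝ) ≤ (m : ℝ) := by exact_mod_cast hnm
                linarith
            linarith
          have hInterEq : {ω | GS (Ustar ω) θ ∈ Iic sstar}
              = ⋂ n : ℕ, {ω | GS (Ustar ω) θ < sstar + 1 / ((n : ℝ) + 1)} := by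
            ext ω
            simp only [mem_setOf_eq, mem_Iic, mem_iInter]
            constructor
            · intro hle n
              have : (0 : ℝ) < 1 / ((n : ℝ) + 1) := by positivity
              linarith
            · intro hall
              by_contra hlt
              push_neg at hlt
              obtain ⟨n, hn⟩ := exists_nat_one_div_lt (by linarith : 0 < GS (Ustar ω) θ - sstar)
              have := hall n
              linarith
          have hbound : ∀ n : ℕ,
              ENNReal.ofReal (1 - α) ≤ P {ω | GS (Ustar ω) θ < sstar + 1 / ((n : ℝ) + 1)} := by
            intro n
            have hgt : sstar < sstar + 1 / ((n : ℝ) + 1) := by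
              have : (0 : ℝ) < 1 / ((n : ℝ) + 1) := by positivity
              linarith
            have hnotD : 1 - α < h (sstar + 1 / ((n : ℝ) + 1)) := by
              by_contra hle
              push_neg at hle
              have hle' : sstar + 1 / ((n : ℝ) + 1) ≤ sstar :=
                le_csSup hbdd (show _ ∈ {s : ℝ | h s ≤ 1 - α} from hle)
              linarith
            have h2 : h (sstar + 1 / ((n : ℝ) + 1))
                ≤ (P {ω | GS (Ustar ω) θ < sstar + 1 / ((n : ℝ) + 1)}).toReal := by
              rw [hhdef]
              exact ENNReal.toReal_mono (hPfin _) (measure_mono (hF _))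
            exact ENNReal.ofReal_le_of_le_toReal (by linarith)
          have hEq := Directed.measure_iInter hmeasA hanti.directed_ge ⟨0, hPfin _⟩
          have hge : ENNReal.ofReal (1 - α) ≤ P {ω | GS (Ustar ω) θ ∈ Iic sstar} := by
            rw [hInterEq, hEq]
            exact le_iInf hbound
          have := ENNReal.toReal_mono (hPfin _) hge
          rwa [ENNReal.toReal_ofReal (by linarith : (0:ℝ) ≤ 1 - α)] at this
      · -- sSup not in D : use the event {GS (U ω) θ < sstar}
        refine final (Iio sstar) measurableSet_Iio ?_ ?_
        · intro ω hω
          have hDset : {s : ℝ | h s ≤ 1 - α}.Nonempty := ⟨s₀, hs₀⟩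
          obtain ⟨d, hd, hlt⟩ := exists_lt_of_lt_csSup hDset hω
          exact hDle _ (le_trans (hmonoh hlt.le) hd)
        · push_neg at hmem
          have h2 : h sstar ≤ (P {ω | GS (Ustar ω) θ ∈ Iio sstar}).toReal := by
            rw [hhdef]
            exact ENNReal.toReal_mono (hPfin _) (measure_mono (hF _))
          linarith
    · -- D unbounded above : h ≤ 1 - α everywhere, full coverage
      have hall : ∀ s : ℝ, h s ≤ 1 - α := by
        intro s
        rw [not_bddAbove_iff] at hbdd
        obtain ⟨d, hd, hsd⟩ := hbdd s
        exact le_trans (hmonoh hsd.le) hd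
      have huniv : {ω : Ω | Cminus (GS (U ω) θ) ≤ (θ : EReal)} = univ :=
        eq_univ_of_forall fun ω => hDle _ (hall _)
      rw [huniv, measure_univ, ENNReal.toReal_one]
      linarith
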